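/- On the open set U = {(x,y,z,w) ∈ ℝ⁴ : x > w > y > z > 0}, the first integrals V₁ and V₂ of the map F(x,y,z,w) = (y,z,w, max{0,y,z,w} - x) satisfy V₁(x,y,z,w) = x and V₂(x,y,z,w) = x + w - z; in particular V₁ and V₂ are functionally independent on U. -/
import Mathlib


noncomputable def V1 : ℝ × ℝ × ℝ × ℝ → ℝ :=
  fun p => max (max (max (max 0 p.1) p.2.1) p.2.2.1) p.2.2.2 +
    max 0 (-p.1) + max 0 (-p.2.1) + max 0 (-p.2.2.1) + max 0 (-p.2.2.2)

noncomputable def V2 : ℝ × ℝ × ℝ × ℝ → ℝ :=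
  fun p => max (max (max (max (max 0 p.1) p.2.1) p.2.2.1) p.2.2.2) (p.1 + p.2.2.2) +
    max (max 0 p.1) p.2.1 + max (max 0 p.2.1) p.2.2.1 + max (max 0 p.2.2.1) p.2.2.2 -
    p.1 - p.2.1 - p.2.2.1 - p.2.2.2

def U : Set (ℝ × ℝ × ℝ × ℝ) :=
  {p | p.1 > p.2.2.2 ∧ p.2.2.2 > p.2.1 ∧ p.2.1 > p.2.2.1 ∧ p.2.2.1 > 0}

theorem stmt_7 :
    (∀ p ∈ U, V1 p = p.1 ∧ V2 p = p.1 + p.2.2.2 - p.2.2.1) ∧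
    LinearIndependent ℝ ![(![1, 0, 0, 0] : Fin 4 → ℝ), ![1, 0, -1, 1]] := by
  constructor
  · rintro ⟨x, y, z, w⟩ ⟨h1, h2, h3, h4⟩
    simp only [gt_iff_lt] at h1 h2 h3 h4
    have e1 : max (0:ℝ) x = x := max_eq_right (by linarith)
    have e2 : max x y = x := max_eq_left (by linarith)
    have e3 : max x z = x := max_eq_left (by linarith)
    have e4 : max x w = x := max_eq_left (by linarith)
    have e5 : max x (x + w) = x + w := max_eq_right (by linarith)
    have e6 : max (0:ℝ) y = y := max_eq_right (by linarith)
    have e7 : max y z = y := max_eq_left (by linarith)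
    have e8 : max (0:ℝ) z = z := max_eq_right (by linarith)
    have e9 : max z w = w := max_eq_right (by linarith)
    have n1 : max (0:ℝ) (-x) = 0 := max_eq_left (by linarith)
    have n2 : max (0:ℝ) (-y) = 0 := max_eq_left (by linarith)
    have n3 : max (0:ℝ) (-z) = 0 := max_eq_left (by linarith)
    have n4 : max (0:ℝ) (-w) = 0 := max_eq_left (by linarith)
    constructor
    · simp only [V1, e1, e2, e3, e4, n1, n2, n3, n4]; ring
    · simp only [V2, e1, e2, e3, e4, e5, e6, e7, e8, e9]; ring
  · rw [LinearIndependent.pair_iff]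
    intro s t h
    have h0 := congrFun h 0
    have h2 := congrFun h 2
    simp [Matrix.cons_val_zero, Matrix.cons_val_one] at h0 h2
    constructor <;> linarith
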